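/- arXiv:2401.08535 — 9 statements merged into one kernel-verified Lean document; each statement's English description precedes it below -/
import Mathlib

section
/- If I₁, ..., Iₙ are two-sided ideals of a ring R such that the product I₁·I₂·...·Iₙ is nil-essential, then each Iᵢ is nil-essential. -/
/-- A two-sided ideal `μ` is nilpotent if every product of `n` of its elements is `0`
for some fixed `n ≥ 1`, i.e. `μ ^ n = 0`. -/
def TIdealNilpotent {R : Type*} [Ring R] (μ : TwoSidedIdeal R) : Prop :=
  ∃ n : ℕ, 0 < n ∧ ∀ f : Fin n → R, (∀ i, f i ∈ μ) → (List.ofFn f).prod = 0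

def TNilEssential {R : Type*} [Ring R] (I : TwoSidedIdeal R) : Prop :=
  ∀ μ : TwoSidedIdeal R, I ⊓ μ = ⊥ → TIdealNilpotent μ

/-- The product `I 0 · I 1 · ... · I (n-1)` of a family of two-sided ideals: the
two-sided ideal generated by products of elements, one from each factor. -/
def tIdealProd {R : Type*} [Ring R] {n : ℕ} (I : Fin n → TwoSidedIdeal R) : TwoSidedIdeal R :=
  TwoSidedIdeal.span {x | ∃ f : Fin n → R, (∀ i, f i ∈ I i) ∧ x = (List.ofFn f).prod}

lemma prod_mem_of_mem_aux {R : Type*} [Ring R] (J : TwoSidedIdeal R) :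
    ∀ (l : List R) (x : R), x ∈ l → x ∈ J → l.prod ∈ J := by
  intro l
  induction l with
  | nil => simp
  | cons a t ih =>
    intro x hx hxJ
    rw [List.prod_cons]
    rcases List.mem_cons.1 hx with rfl | hxt
    · exact J.mul_mem_right _ _ hxJ
    · exact J.mul_mem_left _ _ (ih x hxt hxJ)

lemma tIdealProd_le {R : Type*} [Ring R] {n : ℕ} (I : Fin n → TwoSidedIdeal R) (i : Fin n) :
    tIdealProd I ≤ I i := by
  intro x hx
  rw [tIdealProd, TwoSidedIdeal.mem_span_iff] at hx
  refine hx (I i) ?_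
  rintro y ⟨f, hf, rfl⟩
  exact prod_mem_of_mem_aux (I i) _ (f i) (List.mem_ofFn.2 ⟨i, rfl⟩) (hf i)

theorem stmt3 {R : Type*} [Ring R] (n : ℕ) (hn : 0 < n) (I : Fin n → TwoSidedIdeal R)
    (h : TNilEssential (tIdealProd I)) : ∀ i, TNilEssential (I i) := by
  intro i μ hμ
  refine h μ (le_bot_iff.1 ?_)
  calc tIdealProd I ⊓ μ ≤ I i ⊓ μ := inf_le_inf_right μ (tIdealProd_le I i)
    _ = ⊥ := hμ
end

section
/- If I is an ideal of a ring R such that I^n is nil-essential for some n ≥ 1, then I is nil-essential. -/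
/-- The `n`-th power of a two-sided ideal: the two-sided ideal generated by
products of `n` elements of `I`. -/
def tIdealPow {R : Type*} [Ring R] (I : TwoSidedIdeal R) (n : ℕ) : TwoSidedIdeal R :=
  TwoSidedIdeal.span {x | ∃ f : Fin n → R, (∀ i, f i ∈ I) ∧ x = (List.ofFn f).prod}

lemma tIdealPow_le {R : Type*} [Ring R] (I : TwoSidedIdeal R) (n : ℕ) (hn : 1 ≤ n) :
    tIdealPow I n ≤ I := by
  intro x hx
  rw [tIdealPow, TwoSidedIdeal.mem_span_iff] at hx
  refine hx I ?_
  rintro y ⟨f, hf, rfl⟩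
  obtain ⟨m, rfl⟩ := Nat.exists_eq_succ_of_ne_zero (by omega : n ≠ 0)
  rw [List.ofFn_succ, List.prod_cons]
  exact I.mul_mem_right _ _ (hf 0)

theorem stmt4 {R : Type*} [Ring R] (I : TwoSidedIdeal R) (n : ℕ) (hn : 1 ≤ n)
    (h : TNilEssential (tIdealPow I n)) : TNilEssential I := by
  intro μ hμ
  refine h μ (le_bot_iff.mp ?_)
  rw [← hμ]
  exact inf_le_inf_right μ (tIdealPow_le I n hn)
end

section
/- Every maximal two-sided ideal M of a ring R which is nil-essential intersects every non-zero ideal of R non-trivially (i.e., M is essential). -/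
theorem stmt8 {R : Type*} [Ring R] (M : TwoSidedIdeal R) (hM : IsCoatom M)
    (h : TNilEssential M) : ∀ μ : TwoSidedIdeal R, μ ≠ ⊥ → M ⊓ μ ≠ ⊥ := by
  intro μ hμ heq
  obtain ⟨n, hn, hf⟩ := h μ heq
  by_cases hle : μ ≤ M
  · exact hμ (by rw [← heq, inf_eq_right.mpr hle])
  · have hsup : M ⊔ μ = ⊤ := hM.2 (M ⊔ μ) (lt_of_le_of_ne le_sup_left (by
      intro hEq
      exact hle (le_trans le_sup_right hEq.ge)))
    have h1 : (1 : R) ∈ M ⊔ μ := by rw [hsup]; trivial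
    obtain ⟨m, hm, u, hu, hmu⟩ := TwoSidedIdeal.mem_sup.mp h1
    have hun : u ^ n = 0 := by
      have := hf (fun _ => u) (fun _ => hu)
      simpa [List.ofFn_const, List.prod_replicate] using this
    have hm' : m = 1 - u := eq_sub_of_add_eq hmu
    have h1M : (1 : R) ∈ M := by
      have hg : m * ∑ i ∈ Finset.range n, u ^ i = (1 : R) := by
        rw [hm']
        have hgs := mul_geom_sum u n
        rw [hun] at hgs
        have : (1 - u) * ∑ i ∈ Finset.range n, u ^ i
            = -((u - 1) * ∑ i ∈ Finset.range n, u ^ i) := by rw [← neg_sub u 1, neg_mul]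
        rw [this, hgs]; simp
      rw [← hg]
      exact M.mul_mem_right _ _ hm
    exact hM.1 (eq_top_iff.mpr fun x _ => by
      simpa using M.mul_mem_left x 1 h1M)
end

section
/- Let R be a commutative Noetherian ring and I a non-zero ideal. Then I is nil-essential if and only if for every non-nilpotent element x ∈ R there exists r ∈ R such that rx ∈ I and rx ≠ 0. -/
def IdealNilpotentC {A : Type*} [CommRing A] (μ : Ideal A) : Prop :=
  ∃ n : ℕ, 0 < n ∧ μ ^ n = ⊥

def NilEssentialC {A : Type*} [CommRing A] (I : Ideal A) : Prop :=
  ∀ μ : Ideal A, I ⊓ μ = ⊥ → IdealNilpotentC μ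

theorem stmt11 {R : Type*} [CommRing R] [IsNoetherianRing R] (I : Ideal R) (hI : I ≠ ⊥) :
    NilEssentialC I ↔
      ∀ x : R, ¬ IsNilpotent x → ∃ r : R, r * x ∈ I ∧ r * x ≠ 0 := by
  constructor
  · intro h x hx
    by_cases hcap : I ⊓ Ideal.span {x} = ⊥
    · obtain ⟨n, hn, hpow⟩ := h _ hcap
      exfalso
      apply hx
      refine ⟨n, ?_⟩
      have : x ^ n ∈ (Ideal.span {x} : Ideal R) ^ n :=
        Ideal.pow_mem_pow (Ideal.mem_span_singleton_self x) n
      rw [hpow] at this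
      simpa using this
    · obtain ⟨y, hy, hy0⟩ := Submodule.ne_bot_iff _ |>.mp hcap
      obtain ⟨hyI, hyJ⟩ := hy
      obtain ⟨r, hr⟩ := Ideal.mem_span_singleton'.mp hyJ
      exact ⟨r, by rw [hr]; exact hyI, by rw [hr]; exact hy0⟩
  · intro h μ hcap
    have hnil : μ ≤ nilradical R := by
      intro x hxμ
      rw [mem_nilradical]
      by_contra hx
      obtain ⟨r, hrI, hr0⟩ := h x hx
      have : r * x ∈ I ⊓ μ := ⟨hrI, μ.mul_mem_left r hxμ⟩
      rw [hcap] at this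
      exact hr0 this
    obtain ⟨n, hn⟩ := IsNoetherianRing.isNilpotent_nilradical R
    refine ⟨n + 1, Nat.succ_pos n, le_bot_iff.mp ?_⟩
    calc μ ^ (n + 1) ≤ (nilradical R) ^ (n + 1) := Ideal.pow_right_mono hnil _
      _ ≤ (nilradical R) ^ n := Ideal.pow_le_pow_right (Nat.le_succ n)
      _ = ⊥ := hn
end

section
/- Let R be a commutative Noetherian ring and I ⊆ J non-zero ideals. Then I is nil-essential in J if and only if for each non-nilpotent element x ∈ J there exists r ∈ R such that rx ∈ I and rx ≠ 0. -/
def NilEssentialInC {A : Type*} [CommRing A] (I K : Ideal A) : Prop :=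
  ∀ μ : Ideal A, μ ≤ K → I ⊓ μ = ⊥ → IdealNilpotentC μ

theorem stmt12 {R : Type*} [CommRing R] [IsNoetherianRing R] (I J : Ideal R)
    (hI : I ≠ ⊥) (hJ : J ≠ ⊥) (hIJ : I ≤ J) :
    NilEssentialInC I J ↔
      ∀ x ∈ J, ¬ IsNilpotent x → ∃ r : R, r * x ∈ I ∧ r * x ≠ 0 := by
  constructor
  · intro h x hxJ hnx
    by_cases hb : I ⊓ Ideal.span {x} = ⊥
    · exfalso
      obtain ⟨n, hn, hpow⟩ := h (Ideal.span {x}) (by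
        rwa [Ideal.span_singleton_le_iff_mem]) hb
      apply hnx
      refine ⟨n, ?_⟩
      have : x ^ n ∈ Ideal.span {x} ^ n :=
        Ideal.pow_mem_pow (Ideal.mem_span_singleton_self x) n
      rw [hpow] at this
      simpa using this
    · obtain ⟨y, hy, hy0⟩ := Submodule.exists_mem_ne_zero_of_ne_bot hb
      obtain ⟨r, hr⟩ := Ideal.mem_span_singleton'.mp hy.2
      exact ⟨r, hr ▸ hy.1, hr ▸ hy0⟩
  · intro h μ hμJ hμI
    have hle : μ ≤ nilradical R := by
      intro x hx
      rw [mem_nilradical]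
      by_contra hnx
      obtain ⟨r, hrI, hr0⟩ := h x (hμJ hx) hnx
      have : r * x ∈ I ⊓ μ := ⟨hrI, μ.mul_mem_left r hx⟩
      rw [hμI] at this
      exact hr0 this
    obtain ⟨n, hn⟩ := IsNoetherianRing.isNilpotent_nilradical R
    refine ⟨n + 1, Nat.succ_pos n, le_bot_iff.mp ?_⟩
    calc μ ^ (n + 1) ≤ (nilradical R) ^ (n + 1) := Ideal.pow_right_mono hle _
      _ ≤ (nilradical R) ^ n := Ideal.pow_le_pow_right (Nat.le_succ n)
      _ = ⊥ := hn
end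

section
/- Let R be a commutative Noetherian ring and I₁ ⊆ J₁, I₂ ⊆ J₂ ideals with J₁ ∩ J₂ = 0. Then I₁ is nil-essential in J₁ and I₂ is nil-essential in J₂ if and only if I₁ ⊕ I₂ is nil-essential in J₁ ⊕ J₂. -/
lemma idealNilpotentC_sup {A : Type*} [CommRing A] {μ₁ μ₂ : Ideal A}
    (h1 : IdealNilpotentC μ₁) (h2 : IdealNilpotentC μ₂) :
    IdealNilpotentC (μ₁ ⊔ μ₂) := by
  obtain ⟨m, hm, hm0⟩ := h1
  obtain ⟨n, hn, hn0⟩ := h2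
  have hnil : IsNilpotent (μ₁ + μ₂) :=
    Commute.isNilpotent_add (mul_comm μ₁ μ₂) ⟨m, by rw [hm0]; rfl⟩ ⟨n, by rw [hn0]; rfl⟩
  obtain ⟨k, hk⟩ := hnil
  refine ⟨k + 1, by omega, ?_⟩
  rw [← Ideal.add_eq_sup]
  refine le_bot_iff.mp ?_
  calc (μ₁ + μ₂) ^ (k + 1) = (μ₁ + μ₂) ^ k * (μ₁ + μ₂) := pow_succ _ _
    _ ≤ (μ₁ + μ₂) ^ k := Ideal.mul_le_left
    _ = ⊥ := hk

theorem stmt14 {R : Type*} [CommRing R] [IsNoetherianRing R]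
    (I₁ I₂ J₁ J₂ : Ideal R) (h₁ : I₁ ≤ J₁) (h₂ : I₂ ≤ J₂) (hJ : J₁ ⊓ J₂ = ⊥) :
    (NilEssentialInC I₁ J₁ ∧ NilEssentialInC I₂ J₂) ↔
      NilEssentialInC (I₁ ⊔ I₂) (J₁ ⊔ J₂) := by
  constructor
  · rintro ⟨hA, hB⟩ μ hμ hint
    have hμ1 : IdealNilpotentC (μ ⊓ J₁) := by
      apply hA _ inf_le_right
      rw [← le_bot_iff, ← hint]
      exact le_inf (le_trans inf_le_left le_sup_left)
        (le_trans inf_le_right inf_le_left)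
    have hμ2 : IdealNilpotentC (μ ⊓ J₂) := by
      apply hB _ inf_le_right
      rw [← le_bot_iff, ← hint]
      exact le_inf (le_trans inf_le_left le_sup_right)
        (le_trans inf_le_right inf_le_left)
    obtain ⟨k, hk, hk0⟩ := idealNilpotentC_sup hμ1 hμ2
    refine ⟨2 * k, by omega, ?_⟩
    have hsq : μ ^ 2 ≤ (μ ⊓ J₁) ⊔ (μ ⊓ J₂) := by
      calc μ ^ 2 = μ * μ := sq μ
        _ ≤ μ * (J₁ ⊔ J₂) := Ideal.mul_mono_right hμ
        _ = μ * J₁ ⊔ μ * J₂ := Submodule.mul_sup μ J₁ J₂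
        _ ≤ (μ ⊓ J₁) ⊔ (μ ⊓ J₂) := sup_le_sup Ideal.mul_le_inf Ideal.mul_le_inf
    refine le_bot_iff.mp ?_
    calc μ ^ (2 * k) = (μ ^ 2) ^ k := by rw [← pow_mul]
      _ ≤ ((μ ⊓ J₁) ⊔ (μ ⊓ J₂)) ^ k := Ideal.pow_right_mono hsq k
      _ = ⊥ := hk0
  · intro h
    constructor
    · intro μ hμ hint
      apply h μ (le_trans hμ le_sup_left)
      rw [← le_bot_iff]
      calc (I₁ ⊔ I₂) ⊓ μ ≤ ((I₁ ⊔ I₂) ⊓ J₁) ⊓ μ :=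
            le_inf (le_inf inf_le_left (le_trans inf_le_right hμ)) inf_le_right
        _ = (I₁ ⊔ (I₂ ⊓ J₁)) ⊓ μ := by rw [sup_inf_assoc_of_le _ h₁]
        _ ≤ (I₁ ⊔ (J₂ ⊓ J₁)) ⊓ μ := by
            exact inf_le_inf_right μ (sup_le_sup_left (inf_le_inf_right J₁ h₂) I₁)
        _ = I₁ ⊓ μ := by rw [inf_comm J₂ J₁, hJ, sup_bot_eq]
        _ = ⊥ := hint
    · intro μ hμ hint
      apply h μ (le_trans hμ le_sup_right)
      rw [← le_bot_iff]
      calc (I₁ ⊔ I₂) ⊓ μ ≤ ((I₂ ⊔ I₁) ⊓ J₂) ⊓ μ := by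
            rw [sup_comm I₂ I₁]
            exact le_inf (le_inf inf_le_left (le_trans inf_le_right hμ)) inf_le_right
        _ = (I₂ ⊔ (I₁ ⊓ J₂)) ⊓ μ := by rw [sup_inf_assoc_of_le _ h₂]
        _ ≤ (I₂ ⊔ (J₁ ⊓ J₂)) ⊓ μ := by
            exact inf_le_inf_right μ (sup_le_sup_left (inf_le_inf_right J₂ h₁) I₂)
        _ = I₂ ⊓ μ := by rw [hJ, sup_bot_eq]
        _ = ⊥ := hint
end

section
/- Let R be a commutative Noetherian ring and I ⊆ J ideals with I nil-essential in J. Then for every a ∈ J, the ideal quotient (I : a) = {r ∈ R : ra ∈ I} is nil-essential in R. -/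
theorem stmt15 {R : Type*} [CommRing R] [IsNoetherianRing R] (I J : Ideal R)
    (hIJ : I ≤ J) (h : NilEssentialInC I J) :
    ∀ a ∈ J, NilEssentialC (I.colon (Ideal.span {a})) := by
  intro a ha μ hμ
  -- key fact: if x ∈ μ and x*a ∈ I then x = 0
  have key : ∀ x ∈ μ, x * a ∈ I → x = 0 := by
    intro x hx hxa
    have hmem : x ∈ I.colon (Ideal.span {a}) ⊓ μ :=
      ⟨Ideal.mem_colon_span_singleton.mpr hxa, hx⟩
    rw [hμ] at hmem
    simpa using hmem
  -- the ideal a·μ is contained in J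
  have hKJ : Ideal.span {a} * μ ≤ J :=
    le_trans Ideal.mul_le_left (Ideal.span_le.mpr (by simpa using ha))
  -- I ⊓ a·μ = ⊥
  have hI0 : I ⊓ (Ideal.span {a} * μ) = ⊥ := by
    apply le_antisymm _ bot_le
    rintro x ⟨hxI, hxK⟩
    obtain ⟨y, hy, hyx⟩ := Ideal.mem_span_singleton_mul.mp hxK
    have hyI : y * a ∈ I := by
      rw [mul_comm, hyx]; exact hxI
    have : y = 0 := key y hy hyI
    simp [Ideal.mem_bot, ← hyx, this]
  obtain ⟨n, hn, hpow⟩ := h _ hKJ hI0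
  -- multiplication by a^k is injective on μ
  have inj : ∀ (k : ℕ), ∀ x ∈ μ, a ^ k * x = 0 → x = 0 := by
    intro k
    induction k with
    | zero => intro x _ hx; simpa using hx
    | succ k ih =>
        intro x hx hax
        have hax' : a ^ k * (a * x) = 0 := by
          rw [← hax]; ring
        have h1 : a * x = 0 := ih (a * x) (μ.mul_mem_left a hx) hax'
        exact key x hx (by rw [mul_comm, h1]; exact I.zero_mem)
  refine ⟨n, hn, ?_⟩
  apply le_antisymm _ bot_le
  intro x hx
  have hxμ : x ∈ μ := Ideal.pow_le_self hn.ne' hx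
  have hmem : a ^ n * x ∈ (Ideal.span {a} * μ) ^ n := by
    rw [mul_pow, Ideal.span_singleton_pow]
    exact Ideal.mul_mem_mul (Ideal.mem_span_singleton_self _) hx
  rw [hpow] at hmem
  have : a ^ n * x = 0 := by simpa using hmem
  simpa [Ideal.mem_bot] using inj n x hxμ this
end

section
/- Let R be a commutative Noetherian ring, S the set of non-zero-divisors of R, and I an ideal of R. Then I is nil-essential in R if and only if the localized ideal S⁻¹I is nil-essential in S⁻¹R. -/
theorem stmt17 {R : Type*} [CommRing R] [IsNoetherianRing R] (I : Ideal R) :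
    NilEssentialC I ↔
      NilEssentialC (I.map (algebraMap R (Localization (nonZeroDivisors R)))) := by
  set L := Localization (nonZeroDivisors R)
  set f := algebraMap R L
  have hinj : Function.Injective f := IsLocalization.injective L le_rfl
  constructor
  · intro h μ hμ
    -- contract μ
    have hν : I ⊓ μ.comap f = ⊥ := by
      rw [eq_bot_iff]
      rintro x ⟨hxI, hxμ⟩
      have : f x ∈ I.map f ⊓ μ := ⟨Ideal.mem_map_of_mem f hxI, hxμ⟩
      rw [hμ] at this
      have : f x = 0 := this
      simpa using hinj (by simpa using this)
    obtain ⟨n, hn, hpow⟩ := h _ hν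
    refine ⟨n, hn, ?_⟩
    have := IsLocalization.map_comap (nonZeroDivisors R) L μ
    calc μ ^ n = ((μ.comap f).map f) ^ n := by rw [this]
      _ = ((μ.comap f) ^ n).map f := (Ideal.map_pow _ _ _).symm
      _ = ⊥ := by rw [hpow, Ideal.map_bot]
  · intro h ν hν
    have hmap : I.map f ⊓ ν.map f = ⊥ := by
      rw [eq_bot_iff]
      rintro x ⟨hxI, hxν⟩
      obtain ⟨⟨a, s⟩, ha⟩ := (IsLocalization.mem_map_algebraMap_iff (nonZeroDivisors R) L).mp hxI
      obtain ⟨⟨b, t⟩, hb⟩ := (IsLocalization.mem_map_algebraMap_iff (nonZeroDivisors R) L).mp hxν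
      -- x * f s = f a, x * f t = f b
      have key : f ((t : R) * a) = f ((s : R) * b) := by
        simp only [map_mul]
        rw [← ha, ← hb]; ring
      have heq : (t : R) * a = (s : R) * b := hinj key
      have hmem : (t : R) * (a : R) ∈ I ⊓ ν := by
        constructor
        · exact I.mul_mem_left _ a.2
        · rw [heq]; exact ν.mul_mem_left _ b.2
      rw [hν] at hmem
      have hz : f ((t : R) * a) = 0 := by rw [Submodule.mem_bot] at hmem; rw [hmem, map_zero]
      have hx0 : x * (f s * f t) = 0 := by
        rw [← mul_assoc, ha, ← map_mul, mul_comm (a : R), hz]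
      have hunit : IsUnit (f s * f t) :=
        ((IsLocalization.map_units L s).mul (IsLocalization.map_units L t))
      have hx' : x = 0 := by
        rcases hunit with ⟨u, hu⟩
        have := congrArg (· * (↑u⁻¹ : L)) hx0
        simpa [← hu, mul_assoc] using this
      simp [hx']
    obtain ⟨n, hn, hpow⟩ := h _ hmap
    refine ⟨n, hn, ?_⟩
    rw [eq_bot_iff]
    intro x hx
    have : f x ∈ (ν.map f) ^ n := by
      rw [← Ideal.map_pow]
      exact Ideal.mem_map_of_mem f hx
    rw [hpow, Submodule.mem_bot] at this
    simpa using hinj (by simpa using this)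
end

section
/- Let R be a commutative Noetherian ring, S a multiplicatively closed subset of R containing no zero divisors, and I an ideal of R. If S⁻¹I is nil-essential in S⁻¹R, then I is nil-essential in R. -/
theorem stmt18 {R : Type*} [CommRing R] [IsNoetherianRing R] (S : Submonoid R)
    (hS : S ≤ nonZeroDivisors R) (I : Ideal R)
    (h : NilEssentialC (I.map (algebraMap R (Localization S)))) :
    NilEssentialC I := by
  intro μ hμ
  have hinj : Function.Injective (algebraMap R (Localization S)) :=
    IsLocalization.injective _ hS
  have hbot : I.map (algebraMap R (Localization S)) ⊓ μ.map (algebraMap R (Localization S)) = ⊥ := by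
    rw [eq_bot_iff]
    intro z hz
    obtain ⟨hz1, hz2⟩ := Submodule.mem_inf.mp hz
    rw [IsLocalization.mem_map_algebraMap_iff S] at hz1 hz2
    obtain ⟨⟨x, s⟩, hx⟩ := hz1
    obtain ⟨⟨y, t⟩, hy⟩ := hz2
    have key : algebraMap R (Localization S) ((x : R) * t) =
        algebraMap R (Localization S) ((y : R) * s) := by
      simp only [map_mul]
      rw [← hx, ← hy]; ring
    obtain ⟨c, hc⟩ := (IsLocalization.eq_iff_exists S _).mp key
    have hmem : (c : R) * ((x : R) * t) ∈ I ⊓ μ := by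
      constructor
      · exact Ideal.mul_mem_left _ _ (Ideal.mul_mem_right _ _ x.2)
      · rw [hc]; exact Ideal.mul_mem_left _ _ (Ideal.mul_mem_right _ _ y.2)
    rw [hμ, Ideal.mem_bot] at hmem
    have h0 : algebraMap R (Localization S) ((c : R) * ((x : R) * t)) = 0 := by
      rw [hmem, map_zero]
    simp only [map_mul] at h0
    have hu : ∀ u : S, IsUnit (algebraMap R (Localization S) (u : R)) :=
      fun u => IsLocalization.map_units _ u
    have hx0 : algebraMap R (Localization S) (x : R) = 0 :=
      ((hu t).mul_left_eq_zero).mp (((hu c).mul_right_eq_zero).mp h0)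
    have hz0 : z * algebraMap R (Localization S) (s : R) = 0 := by rw [hx, hx0]
    rw [Submodule.mem_bot]
    exact ((hu s).mul_left_eq_zero).mp hz0

  obtain ⟨n, hn, hn0⟩ := h (μ.map (algebraMap R (Localization S))) hbot
  refine ⟨n, hn, ?_⟩
  rw [← Ideal.map_pow] at hn0
  rw [eq_bot_iff]
  intro x hx
  have hx' : algebraMap R (Localization S) x ∈
      Ideal.map (algebraMap R (Localization S)) (μ ^ n) :=
    Ideal.mem_map_of_mem _ hx
  rw [hn0, Ideal.mem_bot] at hx'
  rw [Ideal.mem_bot]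
  exact hinj (by simpa using hx')
end
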